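/- Let G be a finite simple graph that is a tree (connected and acyclic), with graph distance d. Let a, b, c, d₀ be vertices such that the unique path from a to b and the unique path from c to d₀ share at least one vertex; equivalently, there exists a vertex v with d(a,v) + d(v,b) = d(a,b) and d(c,v) + d(v,d₀) = d(c,d₀). Then d(a,b) + d(c,d₀) = max( d(a,c) + d(b,d₀), d(a,d₀) + d(b,c) ). -/

import Mathlib

open SimpleGraph Walk

section Aux

set_option linter.unusedSectionVars false

variable {V : Type*} [DecidableEq V] {G : SimpleGraph V}

/-- Appending two paths whose supports meet only in the middle vertex gives a path. -/
lemma aux_isPath_append {u v w : V} {p : G.Walk u v} {q : G.Walk v w}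
    (hp : p.IsPath) (hq : q.IsPath)
    (h : ∀ x ∈ p.support, x ∈ q.support → x = v) : (p.append q).IsPath := by
  rw [Walk.isPath_def, Walk.support_append, List.nodup_append]
  refine ⟨hp.support_nodup, ?_, ?_⟩
  · have := hq.support_nodup
    rw [q.support_eq_cons] at this
    exact this.of_cons
  · intro x hx y hx' hxy
    subst hxy
    have hxv : x = v := h x hx (List.mem_of_mem_tail hx')
    subst hxv
    have := hq.support_nodup
    rw [q.support_eq_cons] at this
    exact (List.nodup_cons.mp this).1 hx'

/-- In a tree, every path realizes the distance between its endpoints. -/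
lemma aux_tree_path_length (hT : G.IsTree) {u v : V} (p : G.Walk u v)
    (hp : p.IsPath) : p.length = G.dist u v := by
  obtain ⟨q, hq⟩ := hT.isConnected.exists_walk_length_eq_dist u v
  have hb : q.bypass.IsPath := q.bypass_isPath
  have hbl : q.bypass.length ≤ G.dist u v := hq ▸ q.length_bypass_le
  obtain ⟨r, -, hr⟩ := hT.existsUnique_path u v
  have h1 : p = r := hr p hp
  have h2 : q.bypass = r := hr q.bypass hb
  have h3 : p.length = q.bypass.length := by rw [h1, h2]
  have := SimpleGraph.dist_le p
  omega

/-- A walk whose length equals the distance is a path. -/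
lemma aux_isPath_of_length_eq_dist {u v : V} (p : G.Walk u v)
    (h : p.length = G.dist u v) : p.IsPath := by
  have h1 : p.length ≤ p.bypass.length := h ▸ SimpleGraph.dist_le p.bypass
  have h2 := p.bypass_eq_self_of_length_le h1
  rw [← h2]
  exact p.bypass_isPath

/-- Splitting a path in a tree at a support vertex splits the distance. -/
lemma aux_tree_dist_split (hT : G.IsTree) {u v w : V} (p : G.Walk u v)
    (hp : p.IsPath) (hw : w ∈ p.support) :
    G.dist u w + G.dist w v = G.dist u v := by
  have hlen : (p.takeUntil w hw).length + (p.dropUntil w hw).length = p.length := by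
    conv_rhs => rw [← p.take_spec hw]
    rw [Walk.length_append]
  rw [← aux_tree_path_length hT _ (hp.takeUntil hw),
    ← aux_tree_path_length hT _ (hp.dropUntil hw),
    ← aux_tree_path_length hT _ hp]
  exact hlen

/-- In a tree, a vertex metrically between `u` and `v` lies on any path from `u` to `v`. -/
lemma aux_tree_mem_support (hT : G.IsTree) {u v w : V} (p : G.Walk u v)
    (hp : p.IsPath) (h : G.dist u w + G.dist w v = G.dist u v) : w ∈ p.support := by
  obtain ⟨r, hr⟩ := hT.isConnected.exists_walk_length_eq_dist u w
  obtain ⟨s, hs⟩ := hT.isConnected.exists_walk_length_eq_dist w v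
  have hlen : (r.append s).length = G.dist u v := by
    rw [Walk.length_append, hr, hs, h]
  have hpath : (r.append s).IsPath := aux_isPath_of_length_eq_dist _ hlen
  obtain ⟨t, -, ht⟩ := hT.existsUnique_path u v
  have h1 : p = t := ht p hp
  have h2 : r.append s = t := ht _ hpath
  rw [h1, ← h2]
  exact (Walk.mem_support_append_iff _ _).2 (Or.inl r.end_mem_support)

/-- First-hit lemma: given a path `q : x → y` and a path `p : y → z`, there is a vertex
`w` on `p` and a path from `x` to `w` meeting `p` only at `w`. -/
lemma aux_firstHit {x y : V} (q : G.Walk x y) :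
    q.IsPath → ∀ (z : V) (p : G.Walk y z),
    ∃ w, ∃ _ : w ∈ p.support, ∃ r : G.Walk x w, r.IsPath ∧ r.support ⊆ q.support ∧
      ∀ u ∈ r.support, u ∈ p.support → u = w := by
  induction q with
  | nil =>
    intro _ z p
    exact ⟨_, p.start_mem_support, Walk.nil, Walk.IsPath.nil, fun u hu => hu,
      fun u hu _ => by simpa using hu⟩
  | @cons x x₁ y h q' ih =>
    intro hq z p
    by_cases hx : x ∈ p.support
    · refine ⟨x, hx, Walk.nil, Walk.IsPath.nil, ?_, ?_⟩
      · intro u hu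
        simp only [Walk.support_nil, List.mem_singleton] at hu
        subst hu; exact Walk.start_mem_support _
      · intro u hu _; simpa using hu
    · obtain ⟨hq', hxq'⟩ := (Walk.cons_isPath_iff h q').mp hq
      obtain ⟨w, hw, r', hr', hsub, hdisj⟩ := ih hq' z p
      refine ⟨w, hw, Walk.cons h r', hr'.cons (fun hc => hxq' (hsub hc)), ?_, ?_⟩
      · intro u hu
        rw [Walk.support_cons] at hu ⊢
        rcases List.mem_cons.mp hu with rfl | hu
        · exact List.mem_cons_self
        · exact List.mem_cons_of_mem _ (hsub hu)
      · intro u hu hup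
        rw [Walk.support_cons, List.mem_cons] at hu
        rcases hu with rfl | hu
        · exact absurd hup hx
        · exact hdisj u hu hup

/-- Median (tripod) lemma for trees. -/
lemma aux_tree_median (hT : G.IsTree) (x y z : V) :
    ∃ m, G.dist x m + G.dist m y = G.dist x y ∧
      G.dist x m + G.dist m z = G.dist x z ∧
      G.dist y m + G.dist m z = G.dist y z := by
  obtain ⟨q0, hq0⟩ := hT.isConnected.exists_walk_length_eq_dist x y
  obtain ⟨p0, hp0⟩ := hT.isConnected.exists_walk_length_eq_dist y z
  have hq : q0.bypass.IsPath := q0.bypass_isPath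
  have hp : p0.bypass.IsPath := p0.bypass_isPath
  obtain ⟨w, hw, r, hr, hsub, hdisj⟩ := aux_firstHit q0.bypass hq z p0.bypass
  refine ⟨w, ?_, ?_, aux_tree_dist_split hT _ hp hw⟩
  · have htp : (p0.bypass.takeUntil w hw).IsPath := hp.takeUntil hw
    have happ : (r.append (p0.bypass.takeUntil w hw).reverse).IsPath := by
      apply aux_isPath_append hr htp.reverse
      intro u hu hu'
      apply hdisj u hu
      rw [Walk.support_reverse, List.mem_reverse] at hu'
      exact p0.bypass.support_takeUntil_subset hw hu'
    have hlen := aux_tree_path_length hT _ happ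
    rw [Walk.length_append, Walk.length_reverse,
      aux_tree_path_length hT _ hr, aux_tree_path_length hT _ htp] at hlen
    rw [SimpleGraph.dist_comm (u := w) (v := y)]
    exact hlen
  · have hdp : (p0.bypass.dropUntil w hw).IsPath := hp.dropUntil hw
    have happ : (r.append (p0.bypass.dropUntil w hw)).IsPath := by
      apply aux_isPath_append hr hdp
      intro u hu hu'
      exact hdisj u hu (p0.bypass.support_dropUntil_subset hw hu')
    have hlen := aux_tree_path_length hT _ happ
    rw [Walk.length_append, aux_tree_path_length hT _ hr,
      aux_tree_path_length hT _ hdp] at hlen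
    exact hlen

/-- Key lemma: in a tree, a vertex on the geodesic `[x,y]` lies on `[x,z]` or on `[y,z]`. -/
lemma aux_tree_on_side (hT : G.IsTree) {x y z v : V}
    (hv : G.dist x v + G.dist v y = G.dist x y) :
    G.dist x v + G.dist v z = G.dist x z ∨ G.dist y v + G.dist v z = G.dist y z := by
  obtain ⟨m, h1, h2, h3⟩ := aux_tree_median hT x y z
  obtain ⟨p0, hp0⟩ := hT.isConnected.exists_walk_length_eq_dist x y
  have hp : p0.bypass.IsPath := p0.bypass_isPath
  have hvp : v ∈ p0.bypass.support := aux_tree_mem_support hT _ hp hv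
  have hmp : m ∈ p0.bypass.support := aux_tree_mem_support hT _ hp h1
  have hvsplit : v ∈ (p0.bypass.takeUntil m hmp).support ∨
      v ∈ (p0.bypass.dropUntil m hmp).support := by
    rw [← p0.bypass.take_spec hmp] at hvp
    exact (Walk.mem_support_append_iff _ _).1 hvp
  rcases hvsplit with hvt | hvd
  · left
    have hxvm : G.dist x v + G.dist v m = G.dist x m :=
      aux_tree_dist_split hT _ (hp.takeUntil hmp) hvt
    have t1 : G.dist x z ≤ G.dist x v + G.dist v z := hT.isConnected.dist_triangle
    have t2 : G.dist v z ≤ G.dist v m + G.dist m z := hT.isConnected.dist_triangle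
    omega
  · right
    have hmvy : G.dist m v + G.dist v y = G.dist m y :=
      aux_tree_dist_split hT _ (hp.dropUntil hmp) hvd
    have t1 : G.dist y z ≤ G.dist y v + G.dist v z := hT.isConnected.dist_triangle
    have t2 : G.dist v z ≤ G.dist v m + G.dist m z := hT.isConnected.dist_triangle
    have c1 : G.dist m v = G.dist v m := SimpleGraph.dist_comm
    have c2 : G.dist v y = G.dist y v := SimpleGraph.dist_comm
    have c3 : G.dist m y = G.dist y m := SimpleGraph.dist_comm
    omega

end Aux

/-- In a finite tree, if the path from `a` to `b` and the path from `c` to `d` share a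
vertex, then `d(a,b) + d(c,d) = max(d(a,c) + d(b,d), d(a,d) + d(b,c))`. -/
theorem tree_four_point_equality {V : Type*} [Fintype V] (G : SimpleGraph V)
    (hT : G.IsTree) (a b c d : V)
    (hmeet : ∃ v, G.dist a v + G.dist v b = G.dist a b ∧
      G.dist c v + G.dist v d = G.dist c d) :
    G.dist a b + G.dist c d =
      max (G.dist a c + G.dist b d) (G.dist a d + G.dist b c) := by
  classical
  obtain ⟨v, hab, hcd⟩ := hmeet
  have hc := hT.isConnected
  have cav : G.dist a v = G.dist v a := SimpleGraph.dist_comm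
  have cbv : G.dist b v = G.dist v b := SimpleGraph.dist_comm
  have ccv : G.dist c v = G.dist v c := SimpleGraph.dist_comm
  have cdv : G.dist d v = G.dist v d := SimpleGraph.dist_comm
  have cab : G.dist a b = G.dist b a := SimpleGraph.dist_comm
  have ccd : G.dist c d = G.dist d c := SimpleGraph.dist_comm
  have cac : G.dist a c = G.dist c a := SimpleGraph.dist_comm
  have cad : G.dist a d = G.dist d a := SimpleGraph.dist_comm
  have cbc : G.dist b c = G.dist c b := SimpleGraph.dist_comm
  have cbd : G.dist b d = G.dist d b := SimpleGraph.dist_comm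
  have t1 : G.dist a c ≤ G.dist a v + G.dist v c := hc.dist_triangle
  have t2 : G.dist b d ≤ G.dist b v + G.dist v d := hc.dist_triangle
  have t3 : G.dist a d ≤ G.dist a v + G.dist v d := hc.dist_triangle
  have t4 : G.dist b c ≤ G.dist b v + G.dist v c := hc.dist_triangle
  have h1 : G.dist a c + G.dist b d ≤ G.dist a b + G.dist c d := by omega
  have h2 : G.dist a d + G.dist b c ≤ G.dist a b + G.dist c d := by omega
  have key : G.dist a c + G.dist b d = G.dist a b + G.dist c d ∨
      G.dist a d + G.dist b c = G.dist a b + G.dist c d := by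
    by_cases hac : G.dist a v + G.dist v c = G.dist a c
    · by_cases hbd : G.dist b v + G.dist v d = G.dist b d
      · left; omega
      · right
        have hba : G.dist b v + G.dist v a = G.dist b a := by omega
        have had : G.dist a v + G.dist v d = G.dist a d := by
          rcases aux_tree_on_side hT (z := d) hba with h | h
          · exact absurd (by omega : G.dist b v + G.dist v d = G.dist b d) hbd
          · exact h
        have hdc : G.dist d v + G.dist v c = G.dist d c := by omega
        have hbc : G.dist c v + G.dist v b = G.dist c b := by
          rcases aux_tree_on_side hT (z := b) hdc with h | h
          · exact absurd (by omega : G.dist b v + G.dist v d = G.dist b d) hbd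
          · omega
        omega
    · have hbc : G.dist b v + G.dist v c = G.dist b c := by
        rcases aux_tree_on_side hT (z := c) hab with h | h
        · exact absurd h hac
        · exact h
      have had : G.dist d v + G.dist v a = G.dist d a := by
        rcases aux_tree_on_side hT (z := a) hcd with h | h
        · exact absurd (by omega : G.dist a v + G.dist v c = G.dist a c) hac
        · exact h
      right; omega
  rcases key with hk | hk
  · rw [max_eq_left (by omega)]; omega
  · rw [max_eq_right (by omega)]; omega
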